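/- Consider a finite MDP (S, A, P) with bounded reward function R : S × A → ℝ, and suppose there exists a state s* ∈ S that is recurrent under every stationary policy. Then there exist a real number v and a function h : S → ℝ such that for every state s ∈ S, h(s) + v = max_{a∈A} ( R(s,a) + Σ_{s'∈S} P(s,a,s') h(s') ), and v equals the optimal expected average reward sup_π lim_{T→∞} (1/T) Σ_{k=0}^{T−1} E[R(s_k, a_k)] (which is independent of the initial state). -/

import Mathlib

open Filter Topology MeasureTheory

section MDPDefs

variable {S A : Type*} [Fintype S] [Fintype A] [DecidableEq S] [DecidableEq A]

/-- `P` is a valid transition kernel for a finite MDP: each `P s a ·` is a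
probability distribution on states. -/
def IsKernel (P : S → A → S → ℝ) : Prop :=
  (∀ s a s', 0 ≤ P s a s') ∧ ∀ s a, (∑ s' : S, P s a s') = 1

/-- A (randomized) stationary policy: each `π s ·` is a probability
distribution on actions. -/
def IsPolicy (π : S → A → ℝ) : Prop :=
  (∀ s a, 0 ≤ π s a) ∧ ∀ s, (∑ a : A, π s a) = 1

/-- The deterministic policy associated with `f : S → A`. -/
def detPol (f : S → A) : S → A → ℝ := fun s a => if a = f s then 1 else 0

/-- The distribution of the state-action pair `(s_k, a_k)` of the Markov chain
induced by policy `π`, transition kernel `P` and initial state `s₀`. -/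
noncomputable def stepDist (P : S → A → S → ℝ) (π : S → A → ℝ) (s₀ : S) :
    ℕ → S × A → ℝ
  | 0 => fun p => (if p.1 = s₀ then (1 : ℝ) else 0) * π p.1 p.2
  | n + 1 => fun p =>
      (∑ q : S × A, stepDist P π s₀ n q * P q.1 q.2 p.1) * π p.1 p.2

/-- `E[R(s_k, a_k)]` for the chain induced by `π` from `s₀`. -/
noncomputable def expRw (P : S → A → S → ℝ) (π : S → A → ℝ) (s₀ : S)
    (R : S → A → ℝ) (k : ℕ) : ℝ :=
  ∑ p : S × A, stepDist P π s₀ k p * R p.1 p.2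

/-- Discounted value `Σ_k γ^k E[R(s_k,a_k)]` of policy `π` from `s₀`. -/
noncomputable def discVal (P : S → A → S → ℝ) (π : S → A → ℝ) (s₀ : S)
    (R : S → A → ℝ) (γ : ℝ) : ℝ :=
  ∑' k : ℕ, γ ^ k * expRw P π s₀ R k

/-- The running average `(1/T) Σ_{k<T} E[R(s_k,a_k)]`. -/
noncomputable def avgSeq (P : S → A → S → ℝ) (π : S → A → ℝ) (s₀ : S)
    (R : S → A → ℝ) (T : ℕ) : ℝ :=
  (∑ k ∈ Finset.range T, expRw P π s₀ R k) / (T : ℝ)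

/-- Optimal expected average reward from initial state `s₀`:
`sup_π lim_T (1/T) Σ_{k<T} E[R(s_k,a_k)]`. -/
noncomputable def optAvg (P : S → A → S → ℝ) (s₀ : S) (R : S → A → ℝ) : ℝ :=
  sSup {v : ℝ | ∃ π : S → A → ℝ, IsPolicy π ∧
    Tendsto (avgSeq P π s₀ R) atTop (nhds v)}

/-- Transition matrix of the Markov chain on `S` induced by policy `π`. -/
noncomputable def polMatrix (P : S → A → S → ℝ) (π : S → A → ℝ) :
    Matrix S S ℝ :=
  Matrix.of fun s s' => ∑ a : A, π s a * P s a s'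

/-- Unichain MDP: for every stationary policy the induced chain is ergodic,
i.e. every state is reachable from every other state. -/
def Unichain (P : S → A → S → ℝ) : Prop :=
  ∀ π : S → A → ℝ, IsPolicy π → ∀ s s' : S,
    ∃ n : ℕ, 1 ≤ n ∧ 0 < ((polMatrix P π) ^ n) s s'

/-- `sstar` is recurrent (reachable from every state) under every stationary
policy. -/
def RecurrentForAll (P : S → A → S → ℝ) (sstar : S) : Prop :=
  ∀ π : S → A → ℝ, IsPolicy π → ∀ s : S,
    ∃ n : ℕ, 1 ≤ n ∧ 0 < ((polMatrix P π) ^ n) s sstar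

/-- `(st, ac)` is a trajectory of the MDP with kernel `P` under the probability
measure `μ`: the finite-dimensional distributions satisfy the Markov
transition law. -/
def IsTraj {Ω : Type*} [MeasurableSpace Ω] (μ : Measure Ω)
    (P : S → A → S → ℝ) (st : ℕ → Ω → S) (ac : ℕ → Ω → A) : Prop :=
  ∀ (k : ℕ) (h : ℕ → S × A) (s' : S),
    μ {ω | (∀ i ≤ k, (st i ω, ac i ω) = h i) ∧ st (k + 1) ω = s'}
      = μ {ω | ∀ i ≤ k, (st i ω, ac i ω) = h i}
          * ENNReal.ofReal (P (h k).1 (h k).2 s')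

/-- Policy `π` is feasible for the peak constraints `r^j(s_k,a_k) ≥ 0`
(holding with probability 1 for all times `k`): every state-action pair that
has positive probability at some time satisfies all constraints. -/
def Feasible {J : ℕ} (P : S → A → S → ℝ) (π : S → A → ℝ) (s₀ : S)
    (rc : Fin J → S → A → ℝ) : Prop :=
  ∀ (k : ℕ) (p : S × A), stepDist P π s₀ k p ≠ 0 → ∀ j, 0 ≤ rc j p.1 p.2

/-- Truncated Lagrangian reward
`R̄(s,a) = max(-C, inf_{λ ≥ 0} (r(s,a) + Σ_j λ_j r^j(s,a)))`, with the infimum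
taken in the extended reals. -/
noncomputable def Rbar {J : ℕ} (r : S → A → ℝ) (rc : Fin J → S → A → ℝ)
    (C : ℝ) (s : S) (a : A) : ℝ :=
  (max ((-C : ℝ) : EReal)
    (⨅ lam : {l : Fin J → ℝ // ∀ j, 0 ≤ l j},
      ((r s a + ∑ j : Fin J, lam.1 j * rc j s a : ℝ) : EReal))).toReal

/-- Number of visits to `(s,a)` among times `1, …, t`. -/
def Nvis {Ω : Type*} (st : ℕ → Ω → S) (ac : ℕ → Ω → A)
    (t : ℕ) (s : S) (a : A) (ω : Ω) : ℕ :=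
  ∑ k ∈ Finset.Icc 1 t, (if (st k ω, ac k ω) = (s, a) then 1 else 0)

end MDPDefs


section StmtTwoAux

set_option linter.unusedSectionVars false

namespace StmtTwo

variable {S A : Type*} [Fintype S] [Fintype A] [DecidableEq S] [DecidableEq A]

/-! ### sup helpers -/

lemma abs_ciSup_le [Nonempty A] {F : A → ℝ} {C : ℝ} (h : ∀ a, |F a| ≤ C) :
    |⨆ a, F a| ≤ C := by
  have a0 : A := Classical.arbitrary A
  refine abs_le.2 ⟨?_, ciSup_le fun a => (abs_le.1 (h a)).2⟩
  exact le_trans (abs_le.1 (h a0)).1 (le_ciSup (Finite.bddAbove_range F) a0)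

lemma abs_ciSup_sub_ciSup_le [Nonempty A] {F G : A → ℝ} {C : ℝ}
    (h : ∀ a, |F a - G a| ≤ C) : |(⨆ a, F a) - ⨆ a, G a| ≤ C := by
  have h1 : (⨆ a, F a) ≤ (⨆ a, G a) + C := by
    refine ciSup_le fun a => ?_
    have := (abs_le.1 (h a)).2
    have h2 : F a ≤ G a + C := by linarith
    exact h2.trans (add_le_add_left (le_ciSup (Finite.bddAbove_range G) a) C)
  have h2 : (⨆ a, G a) ≤ (⨆ a, F a) + C := by
    refine ciSup_le fun a => ?_
    have := (abs_le.1 (h a)).1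
    have h2 : G a ≤ F a + C := by linarith
    exact h2.trans (add_le_add_left (le_ciSup (Finite.bddAbove_range F) a) C)
  refine abs_le.2 ⟨by linarith, by linarith⟩

lemma exists_ciSup_eq [Nonempty A] (F : A → ℝ) : ∃ a, (⨆ b, F b) = F a := by
  obtain ⟨a₀, ha₀⟩ := Finite.exists_max F
  exact ⟨a₀, le_antisymm (ciSup_le ha₀) (le_ciSup (Finite.bddAbove_range F) a₀)⟩

/-! ### stochastic matrix lemmas -/

lemma pow_nonneg' {M : Matrix S S ℝ} (h : ∀ i j, 0 ≤ M i j) (n : ℕ) :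
    ∀ i j, 0 ≤ (M ^ n) i j := by
  induction n with
  | zero =>
      intro i j; rw [pow_zero, Matrix.one_apply]
      split <;> norm_num
  | succ n ih =>
      intro i j; rw [pow_succ, Matrix.mul_apply]
      exact Finset.sum_nonneg fun t _ => mul_nonneg (ih i t) (h t j)

lemma pow_rowsum {M : Matrix S S ℝ} (h : ∀ i, ∑ j, M i j = 1) (n : ℕ) :
    ∀ i, ∑ j, (M ^ n) i j = 1 := by
  induction n with
  | zero => intro i; simp [Matrix.one_apply]
  | succ n ih =>
      intro i
      simp only [pow_succ, Matrix.mul_apply]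
      rw [Finset.sum_comm]
      simp_rw [← Finset.mul_sum, h]
      simpa using ih i

lemma pow_entry_le_one {M : Matrix S S ℝ} (h0 : ∀ i j, 0 ≤ M i j)
    (h1 : ∀ i, ∑ j, M i j = 1) (n : ℕ) (i j : S) : (M ^ n) i j ≤ 1 := by
  calc (M ^ n) i j ≤ ∑ j', (M ^ n) i j' :=
        Finset.single_le_sum (fun t _ => pow_nonneg' h0 n i t) (Finset.mem_univ j)
    _ = 1 := pow_rowsum h1 n i

/-! ### policy matrices -/

lemma isPolicy_detPol (f : S → A) : IsPolicy (detPol f) := by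
  constructor
  · intro s a; unfold detPol; split <;> norm_num
  · intro s; simp [detPol]

lemma polMatrix_nonneg {P : S → A → S → ℝ} (hP : IsKernel P) {π : S → A → ℝ}
    (hπ : IsPolicy π) (s s' : S) : 0 ≤ polMatrix P π s s' :=
  Finset.sum_nonneg fun a _ => mul_nonneg (hπ.1 s a) (hP.1 s a s')

lemma polMatrix_rowsum {P : S → A → S → ℝ} (hP : IsKernel P) {π : S → A → ℝ}
    (hπ : IsPolicy π) (s : S) : ∑ s', polMatrix P π s s' = 1 := by
  unfold polMatrix
  simp only [Matrix.of_apply]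
  rw [Finset.sum_comm]
  simp_rw [← Finset.mul_sum, hP.2]
  simpa using hπ.2 s

/-- Deterministic transition matrix. -/
noncomputable def detMat (P : S → A → S → ℝ) (f : S → A) : Matrix S S ℝ :=
  Matrix.of fun s s' => P s (f s) s'

lemma polMatrix_detPol (P : S → A → S → ℝ) (f : S → A) :
    polMatrix P (detPol f) = detMat P f := by
  ext s s'
  simp [polMatrix, detMat, detPol, ite_mul]

lemma detMat_nonneg {P : S → A → S → ℝ} (hP : IsKernel P) (f : S → A) (s s' : S) :
    0 ≤ detMat P f s s' := hP.1 s (f s) s'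

lemma detMat_rowsum {P : S → A → S → ℝ} (hP : IsKernel P) (f : S → A) (s : S) :
    ∑ s', detMat P f s s' = 1 := hP.2 s (f s)

/-! ### taboo matrix and hitting bounds -/

/-- Taboo transition matrix: transitions of the deterministic policy `f`,
with transitions into `sstar` deleted. -/
noncomputable def tabooMat (P : S → A → S → ℝ) (sstar : S) (f : S → A) :
    Matrix S S ℝ :=
  Matrix.of fun s s' => if s' = sstar then 0 else P s (f s) s'

/-- Row sums of powers of the taboo matrix (taboo probabilities of avoiding
`sstar`). -/
noncomputable def uu (P : S → A → S → ℝ) (sstar : S) (f : S → A)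
    (n : ℕ) (s : S) : ℝ :=
  ∑ s', ((tabooMat P sstar f) ^ n) s s'

variable {P : S → A → S → ℝ} {sstar : S} {f : S → A}

lemma tabooMat_nonneg (hP : IsKernel P) (s s' : S) :
    0 ≤ tabooMat P sstar f s s' := by
  unfold tabooMat; simp only [Matrix.of_apply]; split
  · exact le_refl 0
  · exact hP.1 s (f s) s'

lemma tabooMat_le (hP : IsKernel P) (s s' : S) :
    tabooMat P sstar f s s' ≤ detMat P f s s' := by
  unfold tabooMat detMat; simp only [Matrix.of_apply]; split
  · exact hP.1 s (f s) s'
  · exact le_refl _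

lemma tabooMat_rowsum (hP : IsKernel P) (s : S) :
    ∑ s', tabooMat P sstar f s s' = 1 - detMat P f s sstar := by
  have h : ∀ s' : S, tabooMat P sstar f s s'
      = detMat P f s s' - (if s' = sstar then detMat P f s s' else 0) := by
    intro s'; unfold tabooMat detMat; simp only [Matrix.of_apply]
    split <;> ring
  rw [Finset.sum_congr rfl fun s' _ => h s', Finset.sum_sub_distrib,
    Finset.sum_ite_eq' Finset.univ sstar, detMat_rowsum hP]
  simp

lemma uu_nonneg (hP : IsKernel P) (n : ℕ) (s : S) : 0 ≤ uu P sstar f n s :=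
  Finset.sum_nonneg fun s' _ => pow_nonneg' (tabooMat_nonneg hP) n s s'

lemma uu_zero (s : S) : uu P sstar f 0 s = 1 := by
  unfold uu; simp [Matrix.one_apply]

lemma uu_add (n m : ℕ) (s : S) :
    uu P sstar f (n + m) s
      = ∑ t, ((tabooMat P sstar f) ^ n) s t * uu P sstar f m t := by
  unfold uu
  rw [pow_add]
  simp only [Matrix.mul_apply]
  rw [Finset.sum_comm]
  simp_rw [← Finset.mul_sum]

lemma uu_succ (hP : IsKernel P) (n : ℕ) (s : S) :
    uu P sstar f (n + 1) s
      = ∑ t, ((tabooMat P sstar f) ^ n) s t * (1 - detMat P f t sstar) := by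
  rw [uu_add n 1 s]
  refine Finset.sum_congr rfl fun t _ => ?_
  congr 1
  unfold uu
  simp_rw [pow_one]
  exact tabooMat_rowsum hP t

lemma uu_succ_le (hP : IsKernel P) (n : ℕ) (s : S) :
    uu P sstar f (n + 1) s ≤ uu P sstar f n s := by
  rw [uu_succ hP]
  calc ∑ t, ((tabooMat P sstar f) ^ n) s t * (1 - detMat P f t sstar)
      ≤ ∑ t, ((tabooMat P sstar f) ^ n) s t * 1 := by
        refine Finset.sum_le_sum fun t _ => ?_
        refine mul_le_mul_of_nonneg_left ?_ (pow_nonneg' (tabooMat_nonneg hP) n s t)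
        have := detMat_nonneg hP f t sstar; linarith
    _ = uu P sstar f n s := by unfold uu; simp

lemma uu_antitone (hP : IsKernel P) (s : S) :
    Antitone (fun n => uu P sstar f n s) :=
  antitone_nat_of_succ_le fun n => uu_succ_le hP n s

lemma uu_le_one (hP : IsKernel P) (n : ℕ) (s : S) : uu P sstar f n s ≤ 1 := by
  have h := uu_antitone (P := P) (sstar := sstar) (f := f) hP s (Nat.zero_le n)
  simpa [uu_zero] using h

lemma uu_le_sub (hP : IsKernel P) {n : ℕ} (hn : 1 ≤ n) (s : S) :
    uu P sstar f n s ≤ 1 - ((detMat P f) ^ n) s sstar := by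
  obtain ⟨m, rfl⟩ := Nat.exists_eq_add_of_le hn
  rw [Nat.add_comm 1 m]
  clear hn
  induction m generalizing s with
  | zero =>
      have h1 : uu P sstar f 1 s = ∑ s', tabooMat P sstar f s s' := by
        unfold uu; simp_rw [pow_one]
      rw [h1, tabooMat_rowsum hP]
      simp [pow_one]
  | succ m ih =>
      have key : uu P sstar f (m + 1 + 1) s
          = ∑ t, tabooMat P sstar f s t * uu P sstar f (m + 1) t := by
        have h := uu_add (P := P) (sstar := sstar) (f := f) 1 (m + 1) s
        simp_rw [pow_one] at h
        rw [Nat.add_comm 1 (m + 1)] at h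
        exact h
      rw [key]
      have step1 : ∑ t, tabooMat P sstar f s t * uu P sstar f (m + 1) t
          ≤ ∑ t, detMat P f s t * (1 - ((detMat P f) ^ (m + 1)) t sstar) := by
        refine Finset.sum_le_sum fun t _ => ?_
        have h1 : 0 ≤ 1 - ((detMat P f) ^ (m + 1)) t sstar := by
          have := pow_entry_le_one (detMat_nonneg hP f) (detMat_rowsum hP f) (m + 1) t sstar
          linarith
        calc tabooMat P sstar f s t * uu P sstar f (m + 1) t
            ≤ tabooMat P sstar f s t * (1 - ((detMat P f) ^ (m + 1)) t sstar) :=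
              mul_le_mul_of_nonneg_left (ih t) (tabooMat_nonneg hP s t)
          _ ≤ detMat P f s t * (1 - ((detMat P f) ^ (m + 1)) t sstar) :=
              mul_le_mul_of_nonneg_right (tabooMat_le hP s t) h1
      have step2 : ∑ t, detMat P f s t * (1 - ((detMat P f) ^ (m + 1)) t sstar)
          = 1 - ((detMat P f) ^ (m + 1 + 1)) s sstar := by
        simp_rw [mul_sub, mul_one, Finset.sum_sub_distrib, detMat_rowsum hP]
        conv_rhs => rw [pow_succ', Matrix.mul_apply]
      linarith [step1, step2.le, step2.ge]

/-- cumulative `sstar`-hitting probabilities. -/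
lemma qc_sum_identity (hP : IsKernel P) (n : ℕ) (s : S) :
    ∑ k ∈ Finset.range n, (∑ t, ((tabooMat P sstar f) ^ k) s t * detMat P f t sstar)
      = 1 - uu P sstar f n s := by
  induction n with
  | zero => rw [uu_zero]; simp
  | succ n ih =>
      rw [Finset.sum_range_succ, ih, uu_succ hP]
      simp_rw [mul_sub, mul_one, Finset.sum_sub_distrib]
      unfold uu
      ring

lemma qc_nonneg (hP : IsKernel P) (k : ℕ) (s : S) :
    0 ≤ ∑ t, ((tabooMat P sstar f) ^ k) s t * detMat P f t sstar :=
  Finset.sum_nonneg fun t _ =>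
    mul_nonneg (pow_nonneg' (tabooMat_nonneg hP) k s t) (detMat_nonneg hP f t sstar)

lemma qc_le_uu (hP : IsKernel P) (k : ℕ) (s : S) :
    ∑ t, ((tabooMat P sstar f) ^ k) s t * detMat P f t sstar ≤ uu P sstar f k s := by
  unfold uu
  refine Finset.sum_le_sum fun t _ => ?_
  calc ((tabooMat P sstar f) ^ k) s t * detMat P f t sstar
      ≤ ((tabooMat P sstar f) ^ k) s t * 1 := by
        refine mul_le_mul_of_nonneg_left ?_ (pow_nonneg' (tabooMat_nonneg hP) k s t)
        exact pow_entry_le_one (detMat_nonneg hP f) (detMat_rowsum hP f) 1 t sstar |>.trans_eq' (by simp [pow_one])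
    _ = ((tabooMat P sstar f) ^ k) s t := mul_one _

lemma uu_geom_step (hP : IsKernel P) {N : ℕ} {β : ℝ}
    (hβ : ∀ t, uu P sstar f N t ≤ β) (n : ℕ) (s : S) :
    uu P sstar f (n + N) s ≤ β * uu P sstar f n s := by
  rw [uu_add]
  calc ∑ t, ((tabooMat P sstar f) ^ n) s t * uu P sstar f N t
      ≤ ∑ t, ((tabooMat P sstar f) ^ n) s t * β :=
        Finset.sum_le_sum fun t _ =>
          mul_le_mul_of_nonneg_left (hβ t) (pow_nonneg' (tabooMat_nonneg hP) n s t)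
    _ = β * uu P sstar f n s := by unfold uu; rw [← Finset.sum_mul]; ring

lemma uu_geom (hP : IsKernel P) {N : ℕ} {β : ℝ} (hβ0 : 0 ≤ β)
    (hβ : ∀ t, uu P sstar f N t ≤ β) (j : ℕ) (s : S) :
    uu P sstar f (N * j) s ≤ β ^ j := by
  induction j generalizing s with
  | zero => simp [uu_zero]
  | succ j ih =>
      have h1 : N * (j + 1) = N * j + N := by ring
      rw [h1]
      calc uu P sstar f (N * j + N) s ≤ β * uu P sstar f (N * j) s :=
            uu_geom_step hP hβ (N * j) s
        _ ≤ β * β ^ j := mul_le_mul_of_nonneg_left (ih s) hβ0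
        _ = β ^ (j + 1) := by ring

lemma uu_div_bound (hP : IsKernel P) {N : ℕ} {β : ℝ} (hN : 1 ≤ N) (hβ0 : 0 ≤ β)
    (hβ : ∀ t, uu P sstar f N t ≤ β) (k : ℕ) (s : S) :
    uu P sstar f k s ≤ β ^ (k / N) := by
  calc uu P sstar f k s ≤ uu P sstar f (N * (k / N)) s := by
        refine uu_antitone hP s ?_
        rw [Nat.mul_comm]
        exact Nat.div_mul_le_self k N
    _ ≤ β ^ (k / N) := uu_geom hP hβ0 hβ (k / N) s

/-! ### summation bounds -/

lemma sum_range_mul_div (g : ℕ → ℝ) {N : ℕ} (hN : 0 < N) (m : ℕ) :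
    ∑ k ∈ Finset.range (N * m), g (k / N) = N * ∑ j ∈ Finset.range m, g j := by
  induction m with
  | zero => simp
  | succ m ih =>
      have h1 : N * (m + 1) = N * m + N := by ring
      rw [h1, Finset.range_eq_Ico,
        ← Finset.sum_Ico_consecutive _ (Nat.zero_le (N * m)) (Nat.le_add_right _ _),
        ← Finset.range_eq_Ico, ih, Finset.sum_Ico_eq_sum_range]
      have h2 : N * m + N - N * m = N := by omega
      rw [h2]
      have h3 : ∀ k ∈ Finset.range N, g ((N * m + k) / N) = g m := by
        intro k hk
        rw [Nat.mul_add_div hN, Nat.div_eq_of_lt (Finset.mem_range.1 hk), Nat.add_zero]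
      rw [Finset.sum_congr rfl h3, Finset.sum_const, Finset.card_range,
        Finset.sum_range_succ]
      push_cast
      ring

lemma sum_succ_mul_pow_le {β : ℝ} (h0 : 0 ≤ β) (h1 : β < 1) (m : ℕ) :
    ∑ j ∈ Finset.range m, ((j : ℝ) + 1) * β ^ j
      ≤ β / (1 - β) ^ 2 + (1 - β)⁻¹ := by
  have hnorm : ‖β‖ < 1 := by rw [Real.norm_eq_abs, abs_of_nonneg h0]; exact h1
  have hs1 : Summable (fun j : ℕ => (j : ℝ) * β ^ j) := by
    simpa using summable_pow_mul_geometric_of_norm_lt_one 1 hnorm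
  have hs2 : Summable (fun j : ℕ => β ^ j) := summable_geometric_of_lt_one h0 h1
  have hsum : Summable (fun j : ℕ => ((j : ℝ) + 1) * β ^ j) := by
    have := hs1.add hs2
    refine this.congr fun j => ?_
    ring
  have hle : ∑ j ∈ Finset.range m, ((j : ℝ) + 1) * β ^ j
      ≤ ∑' j : ℕ, ((j : ℝ) + 1) * β ^ j := by
    refine Summable.sum_le_tsum _ (fun j _ => ?_) hsum
    positivity
  refine hle.trans ?_
  have ht : ∑' j : ℕ, ((j : ℝ) + 1) * β ^ j
      = (∑' j : ℕ, (j : ℝ) * β ^ j) + ∑' j : ℕ, β ^ j := by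
    rw [← Summable.tsum_add hs1 hs2]
    refine tsum_congr fun j => ?_
    ring
  rw [ht, tsum_coe_mul_geometric_of_norm_lt_one hnorm, tsum_geometric_of_lt_one h0 h1]

/-! ### uniform visit-sum bound -/

lemma exists_K [Nonempty S] (hP : IsKernel P)
    (hrec : RecurrentForAll P sstar) (f : S → A) :
    ∃ K : ℝ, 0 ≤ K ∧ ∀ (n : ℕ) (s : S),
      ∑ k ∈ Finset.range n, ((1 : ℝ) + k) * uu P sstar f k s ≤ K := by
  classical
  have hrec' := hrec (detPol f) (isPolicy_detPol f)
  rw [polMatrix_detPol] at hrec'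
  choose g hg1 hg2 using hrec'
  set M := detMat P f with hM
  set N := Finset.univ.sup g with hNdef
  have hgN : ∀ s, g s ≤ N := fun s => Finset.le_sup (Finset.mem_univ s)
  have hN1 : 1 ≤ N := le_trans (hg1 (Classical.arbitrary S)) (hgN _)
  have hNpos : 0 < N := hN1
  set δ := Finset.univ.inf' Finset.univ_nonempty (fun s => (M ^ (g s)) s sstar)
    with hδdef
  have hδpos : 0 < δ := by
    rw [hδdef, Finset.lt_inf'_iff]
    exact fun s _ => hg2 s
  have hδ1 : δ ≤ 1 := by
    refine le_trans (Finset.inf'_le _ (Finset.mem_univ (Classical.arbitrary S))) ?_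
    exact pow_entry_le_one (detMat_nonneg hP f) (detMat_rowsum hP f) _ _ _
  set β := 1 - δ with hβdef
  have hβ0 : 0 ≤ β := by rw [hβdef]; linarith
  have hβ1 : β < 1 := by rw [hβdef]; linarith
  have hNs : ∀ s, uu P sstar f N s ≤ β := by
    intro s
    calc uu P sstar f N s ≤ uu P sstar f (g s) s := uu_antitone hP s (hgN s)
      _ ≤ 1 - (M ^ (g s)) s sstar := uu_le_sub hP (hg1 s) s
      _ ≤ β := by
          rw [hβdef]
          have : δ ≤ (M ^ (g s)) s sstar :=
            Finset.inf'_le _ (Finset.mem_univ s)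
          linarith
  have h1β : (0 : ℝ) < 1 - β := by rw [hβdef]; linarith
  refine ⟨(N : ℝ) ^ 2 * (β / (1 - β) ^ 2 + (1 - β)⁻¹),
    mul_nonneg (by positivity)
      (add_nonneg (div_nonneg hβ0 (by positivity)) (inv_nonneg.2 h1β.le)), ?_⟩
  intro n s
  have huk : ∀ k, uu P sstar f k s ≤ β ^ (k / N) :=
    fun k => uu_div_bound hP hN1 hβ0 hNs k s
  have step1 : ∑ k ∈ Finset.range n, ((1 : ℝ) + k) * uu P sstar f k s
      ≤ ∑ k ∈ Finset.range (N * n), ((1 : ℝ) + k) * β ^ (k / N) := by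
    calc ∑ k ∈ Finset.range n, ((1 : ℝ) + k) * uu P sstar f k s
        ≤ ∑ k ∈ Finset.range n, ((1 : ℝ) + k) * β ^ (k / N) := by
          refine Finset.sum_le_sum fun k _ => ?_
          refine mul_le_mul_of_nonneg_left (huk k) ?_
          positivity
      _ ≤ ∑ k ∈ Finset.range (N * n), ((1 : ℝ) + k) * β ^ (k / N) := by
          refine Finset.sum_le_sum_of_subset_of_nonneg ?_
            (fun k _ _ => mul_nonneg (by positivity) (pow_nonneg hβ0 _))
          exact Finset.range_subset_range.2 (Nat.le_mul_of_pos_left n hNpos)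
  have step2 : ∑ k ∈ Finset.range (N * n), ((1 : ℝ) + k) * β ^ (k / N)
      ≤ ∑ k ∈ Finset.range (N * n), (N : ℝ) * (((k / N : ℕ) : ℝ) + 1) * β ^ (k / N) := by
    refine Finset.sum_le_sum fun k _ => ?_
    refine mul_le_mul_of_nonneg_right ?_ (by positivity)
    have hk : k + 1 ≤ N * (k / N) + N := by
      have h1 := Nat.div_add_mod k N
      have h2 := Nat.mod_lt k hNpos
      omega
    have hk' : (k : ℝ) + 1 ≤ (N : ℝ) * ((k / N : ℕ) : ℝ) + N := by exact_mod_cast hk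
    rw [mul_add, mul_one]
    linarith
  have step3 : ∑ k ∈ Finset.range (N * n), (N : ℝ) * (((k / N : ℕ) : ℝ) + 1) * β ^ (k / N)
      = (N : ℝ) * ((N : ℝ) * ∑ j ∈ Finset.range n, (((j : ℕ) : ℝ) + 1) * β ^ j) := by
    have := sum_range_mul_div (fun j => (((j : ℕ) : ℝ) + 1) * β ^ j) hNpos n
    rw [← this, Finset.mul_sum]
    refine Finset.sum_congr rfl fun k _ => ?_
    ring
  have step4 : (N : ℝ) * ((N : ℝ) * ∑ j ∈ Finset.range n, ((j : ℝ) + 1) * β ^ j)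
      ≤ (N : ℝ) ^ 2 * (β / (1 - β) ^ 2 + (1 - β)⁻¹) := by
    have h := sum_succ_mul_pow_le hβ0 hβ1 n
    have hN0 : (0 : ℝ) ≤ (N : ℝ) := Nat.cast_nonneg N
    nlinarith [h, sq_nonneg ((N : ℝ))]
  calc ∑ k ∈ Finset.range n, ((1 : ℝ) + k) * uu P sstar f k s
      ≤ ∑ k ∈ Finset.range (N * n), ((1 : ℝ) + k) * β ^ (k / N) := step1
    _ ≤ ∑ k ∈ Finset.range (N * n), (N : ℝ) * (((k / N : ℕ) : ℝ) + 1) * β ^ (k / N) := step2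
    _ = (N : ℝ) * ((N : ℝ) * ∑ j ∈ Finset.range n, ((j : ℝ) + 1) * β ^ j) := step3
    _ ≤ (N : ℝ) ^ 2 * (β / (1 - β) ^ 2 + (1 - β)⁻¹) := step4

lemma exists_K_uniform [Nonempty S] [Nonempty A] (hP : IsKernel P)
    (hrec : RecurrentForAll P sstar) :
    ∃ K : ℝ, 0 ≤ K ∧ ∀ (f : S → A) (n : ℕ) (s : S),
      ∑ k ∈ Finset.range n, ((1 : ℝ) + k) * uu P sstar f k s ≤ K := by
  choose Kf h0 h1 using exists_K (P := P) (sstar := sstar) hP hrec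
  obtain ⟨f₀, hf₀⟩ := Finite.exists_max Kf
  exact ⟨Kf f₀, h0 f₀, fun f n s => le_trans (h1 f n s) (hf₀ f)⟩


/-! ### discounted solutions with uniform bounds -/

lemma one_sub_pow_le {γ : ℝ} (h0 : 0 ≤ γ) (h1 : γ ≤ 1) (m : ℕ) :
    1 - γ ^ m ≤ (m : ℝ) * (1 - γ) := by
  induction m with
  | zero => simp
  | succ m ih =>
      have hpow : γ ^ m ≤ 1 := pow_le_one₀ h0 h1
      have hexp : 1 - γ ^ (m + 1) = (1 - γ) + γ * (1 - γ ^ m) := by ring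
      push_cast
      nlinarith [ih]

lemma key [Nonempty S] [Nonempty A] (hP : IsKernel P) {R : S → A → ℝ} {B K : ℝ}
    (hB : ∀ s a, |R s a| ≤ B) (hB0 : 0 ≤ B) (hK0 : 0 ≤ K)
    (hK : ∀ (f : S → A) (n : ℕ) (s : S),
      ∑ k ∈ Finset.range n, ((1 : ℝ) + k) * uu P sstar f k s ≤ K)
    {γ : ℝ} (hγ0 : 0 ≤ γ) (hγ1 : γ < 1) :
    ∃ (w : S → ℝ) (v : ℝ), (∀ s, |w s| ≤ 2 * B * K) ∧ |v| ≤ B ∧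
      ∀ s, w s + v = ⨆ a, (R s a + γ * ∑ s', P s a s' * w s') := by
  classical
  -- the discounted Bellman operator and its fixed point
  set T : (S → ℝ) → (S → ℝ) :=
    fun V s => ⨆ a, (R s a + γ * ∑ s', P s a s' * V s') with hTdef
  have hT : ∀ V W : S → ℝ, dist (T V) (T W) ≤ γ * dist V W := by
    intro V W
    rw [dist_pi_le_iff (mul_nonneg hγ0 dist_nonneg)]
    intro s
    rw [Real.dist_eq, hTdef]
    refine abs_ciSup_sub_ciSup_le fun a => ?_
    have h1 : (R s a + γ * ∑ s', P s a s' * V s')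
        - (R s a + γ * ∑ s', P s a s' * W s')
        = γ * ∑ s', P s a s' * (V s' - W s') := by
      have h2 : ∑ s', P s a s' * (V s' - W s')
          = ∑ s', P s a s' * V s' - ∑ s', P s a s' * W s' := by
        rw [← Finset.sum_sub_distrib]
        exact Finset.sum_congr rfl fun _ _ => by ring
      rw [h2]; ring
    rw [h1, abs_mul, abs_of_nonneg hγ0]
    refine mul_le_mul_of_nonneg_left ?_ hγ0
    calc |∑ s', P s a s' * (V s' - W s')|
        ≤ ∑ s', |P s a s' * (V s' - W s')| := Finset.abs_sum_le_sum_abs _ _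
      _ ≤ ∑ s', P s a s' * dist V W := by
          refine Finset.sum_le_sum fun s' _ => ?_
          rw [abs_mul, abs_of_nonneg (hP.1 s a s')]
          refine mul_le_mul_of_nonneg_left ?_ (hP.1 s a s')
          rw [← Real.dist_eq]
          exact dist_le_pi_dist V W s'
      _ = dist V W := by rw [← Finset.sum_mul, hP.2 s a, one_mul]
  have hcontr : ContractingWith ⟨γ, hγ0⟩ T :=
    ⟨by exact_mod_cast hγ1, LipschitzWith.of_dist_le_mul hT⟩
  set V : S → ℝ := ContractingWith.fixedPoint T hcontr with hVdef
  have hfix : T V = V := hcontr.fixedPoint_isFixedPt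
  have hV : ∀ s, V s = ⨆ a, (R s a + γ * ∑ s', P s a s' * V s') :=
    fun s => (congrFun hfix s).symm
  -- sup-norm bound on V
  obtain ⟨s₁, hs₁⟩ := Finite.exists_max (fun s => |V s|)
  set Vb := |V s₁| with hVbdef
  have hVabs : ∀ s, |V s| ≤ Vb := hs₁
  have hVb0 : 0 ≤ Vb := abs_nonneg _
  have hVb : Vb ≤ B + γ * Vb := by
    conv_lhs => rw [hVbdef, hV s₁]
    refine abs_ciSup_le fun a => ?_
    have h1 : |∑ s', P s₁ a s' * V s'| ≤ Vb :=
      calc |∑ s', P s₁ a s' * V s'| ≤ ∑ s', |P s₁ a s' * V s'| :=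
            Finset.abs_sum_le_sum_abs _ _
        _ ≤ ∑ s', P s₁ a s' * Vb := by
            refine Finset.sum_le_sum fun s' _ => ?_
            rw [abs_mul, abs_of_nonneg (hP.1 s₁ a s')]
            exact mul_le_mul_of_nonneg_left (hVabs s') (hP.1 s₁ a s')
        _ = Vb := by rw [← Finset.sum_mul, hP.2 s₁ a, one_mul]
    calc |R s₁ a + γ * ∑ s', P s₁ a s' * V s'|
        ≤ |R s₁ a| + γ * |∑ s', P s₁ a s' * V s'| := by
          have h2 := abs_add_le (R s₁ a) (γ * ∑ s', P s₁ a s' * V s')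
          rwa [abs_mul, abs_of_nonneg hγ0] at h2
      _ ≤ B + γ * Vb := add_le_add (hB s₁ a) (mul_le_mul_of_nonneg_left h1 hγ0)
  have h1γ : 0 < 1 - γ := by linarith
  have hVB : Vb * (1 - γ) ≤ B := by nlinarith
  -- greedy policy
  have hgreedy : ∀ s, ∃ a, V s = R s a + γ * ∑ s', P s a s' * V s' := by
    intro s
    obtain ⟨a, ha⟩ := exists_ciSup_eq (fun a => R s a + γ * ∑ s', P s a s' * V s')
    exact ⟨a, (hV s).trans ha⟩
  choose f hf using hgreedy
  set Q : Matrix S S ℝ := tabooMat P sstar f with hQdef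
  set b : S → ℝ := fun t => R t (f t) + γ * V sstar * P t (f t) sstar with hbdef
  -- fixed point via the taboo matrix
  have hVQ : ∀ s, V s = b s + γ * ∑ t, Q s t * V t := by
    intro s
    have hsplit : ∑ s', P s (f s) s' * V s'
        = (∑ t, Q s t * V t) + P s (f s) sstar * V sstar := by
      have h1 : ∀ s', P s (f s) s' * V s'
          = Q s s' * V s' + (if s' = sstar then P s (f s) s' * V s' else 0) := by
        intro s'
        rw [hQdef]
        unfold tabooMat
        simp only [Matrix.of_apply]
        split <;> ring
      rw [Finset.sum_congr rfl fun s' _ => h1 s', Finset.sum_add_distrib,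
        Finset.sum_ite_eq' Finset.univ sstar]
      simp
    rw [hf s, hsplit, hbdef]
    ring
  -- unrolled fixed point identity
  have hUn : ∀ (n : ℕ) (s : S), V s
      = (∑ k ∈ Finset.range n, γ ^ k * ∑ t, (Q ^ k) s t * b t)
        + γ ^ n * ∑ t, (Q ^ n) s t * V t := by
    intro n
    induction n with
    | zero =>
        intro s
        simp [Matrix.one_apply, Finset.sum_ite_eq]
    | succ n ih =>
        intro s
        have hlast : γ ^ n * ∑ t, (Q ^ n) s t * V t
            = γ ^ n * (∑ t, (Q ^ n) s t * b t)
              + γ ^ (n + 1) * ∑ t, (Q ^ (n + 1)) s t * V t := by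
          have h1 : ∀ t, (Q ^ n) s t * V t
              = (Q ^ n) s t * b t + γ * ((Q ^ n) s t * ∑ t', Q t t' * V t') := by
            intro t
            rw [hVQ t]
            ring
          rw [Finset.sum_congr rfl fun t _ => h1 t, Finset.sum_add_distrib, mul_add]
          congr 1
          have h2 : ∑ t, (Q ^ n) s t * ∑ t', Q t t' * V t'
              = ∑ t', (Q ^ (n + 1)) s t' * V t' := by
            simp_rw [Finset.mul_sum]
            rw [Finset.sum_comm]
            refine Finset.sum_congr rfl fun t' _ => ?_
            rw [pow_succ, Matrix.mul_apply, Finset.sum_mul]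
            exact Finset.sum_congr rfl fun t _ => by ring
          simp_rw [← Finset.mul_sum]
          rw [h2]
          ring
        calc V s = (∑ k ∈ Finset.range n, γ ^ k * ∑ t, (Q ^ k) s t * b t)
              + γ ^ n * ∑ t, (Q ^ n) s t * V t := ih s
          _ = (∑ k ∈ Finset.range (n + 1), γ ^ k * ∑ t, (Q ^ k) s t * b t)
              + γ ^ (n + 1) * ∑ t, (Q ^ (n + 1)) s t * V t := by
              rw [hlast, Finset.sum_range_succ]
              ring
  -- the bounded relative value function
  refine ⟨fun s => V s - V sstar, (1 - γ) * V sstar, ?_, ?_, ?_⟩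
  · -- |V s - V sstar| ≤ 2 B K
    intro s
    set u : ℕ → ℝ := fun k => uu P sstar f k s with hudef
    have hu0 : ∀ k, 0 ≤ u k := fun k => uu_nonneg hP k s
    have hu1 : ∀ k, u k ≤ 1 := fun k => uu_le_one hP k s
    set qR : ℕ → ℝ := fun k => ∑ t, (Q ^ k) s t * R t (f t) with hqRdef
    set qc : ℕ → ℝ := fun k => ∑ t, (Q ^ k) s t * detMat P f t sstar with hqcdef
    have hWn : ∀ n : ℕ, V s - V sstar
        = (∑ k ∈ Finset.range n, γ ^ k * qR k)
          + V sstar * ((∑ k ∈ Finset.range n, γ ^ (k + 1) * qc k) - 1)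
          + γ ^ n * ∑ t, (Q ^ n) s t * V t := by
      intro n
      have hsplitb : ∀ k, ∑ t, (Q ^ k) s t * b t
          = qR k + γ * V sstar * qc k := by
        intro k
        rw [hqRdef, hqcdef, hbdef]
        simp only
        rw [Finset.mul_sum, ← Finset.sum_add_distrib]
        refine Finset.sum_congr rfl fun t _ => ?_
        unfold detMat
        simp only [Matrix.of_apply]
        ring
      have hterm : ∀ k, γ ^ k * ∑ t, (Q ^ k) s t * b t
          = γ ^ k * qR k + V sstar * (γ ^ (k + 1) * qc k) := by
        intro k
        rw [hsplitb k, pow_succ]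
        ring
      have h0 := hUn n s
      rw [Finset.sum_congr rfl fun k _ => hterm k, Finset.sum_add_distrib,
        ← Finset.mul_sum] at h0
      rw [h0]
      ring
    -- bounds
    have hsumu : ∀ n : ℕ, ∑ k ∈ Finset.range n, u k ≤ K := by
      intro n
      calc ∑ k ∈ Finset.range n, u k
          ≤ ∑ k ∈ Finset.range n, ((1 : ℝ) + k) * u k := by
            refine Finset.sum_le_sum fun k _ => ?_
            nlinarith [hu0 k, Nat.cast_nonneg (α := ℝ) k]
        _ ≤ K := hK f n s
    have hqRb : ∀ k, |qR k| ≤ B * u k := by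
      intro k
      rw [hqRdef]
      calc |∑ t, (Q ^ k) s t * R t (f t)| ≤ ∑ t, |(Q ^ k) s t * R t (f t)| :=
            Finset.abs_sum_le_sum_abs _ _
        _ ≤ ∑ t, (Q ^ k) s t * B := by
            refine Finset.sum_le_sum fun t _ => ?_
            rw [abs_mul, abs_of_nonneg (pow_nonneg' (tabooMat_nonneg hP) k s t)]
            exact mul_le_mul_of_nonneg_left (hB t (f t))
              (pow_nonneg' (tabooMat_nonneg hP) k s t)
        _ = B * u k := by rw [← Finset.sum_mul, hudef]; unfold uu; ring
    have hA : ∀ n : ℕ, |∑ k ∈ Finset.range n, γ ^ k * qR k| ≤ B * K := by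
      intro n
      calc |∑ k ∈ Finset.range n, γ ^ k * qR k|
          ≤ ∑ k ∈ Finset.range n, |γ ^ k * qR k| := Finset.abs_sum_le_sum_abs _ _
        _ ≤ ∑ k ∈ Finset.range n, B * u k := by
            refine Finset.sum_le_sum fun k _ => ?_
            rw [abs_mul, abs_of_nonneg (pow_nonneg hγ0 k)]
            calc γ ^ k * |qR k| ≤ 1 * |qR k| :=
                  mul_le_mul_of_nonneg_right (pow_le_one₀ hγ0 hγ1.le) (abs_nonneg _)
              _ = |qR k| := one_mul _
              _ ≤ B * u k := hqRb k
        _ = B * ∑ k ∈ Finset.range n, u k := by rw [Finset.mul_sum]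
        _ ≤ B * K := mul_le_mul_of_nonneg_left (hsumu n) hB0
    have hqc0 : ∀ k, 0 ≤ qc k := fun k => qc_nonneg hP k s
    have hqcu : ∀ k, qc k ≤ u k := fun k => qc_le_uu hP k s
    have hD : ∀ n : ℕ, |(∑ k ∈ Finset.range n, γ ^ (k + 1) * qc k) - 1|
        ≤ u n + (1 - γ) * K := by
      intro n
      have hid : ∑ k ∈ Finset.range n, qc k = 1 - u n := qc_sum_identity hP n s
      have hsplit : 1 - ∑ k ∈ Finset.range n, γ ^ (k + 1) * qc k
          = u n + ∑ k ∈ Finset.range n, (1 - γ ^ (k + 1)) * qc k := by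
        have h2 : ∑ k ∈ Finset.range n, (1 - γ ^ (k + 1)) * qc k
            = (∑ k ∈ Finset.range n, qc k)
              - ∑ k ∈ Finset.range n, γ ^ (k + 1) * qc k := by
          rw [← Finset.sum_sub_distrib]
          exact Finset.sum_congr rfl fun k _ => by ring
        rw [h2, hid]; ring
      have hterm_nonneg : ∀ k ∈ Finset.range n, 0 ≤ (1 - γ ^ (k + 1)) * qc k := by
        intro k _
        have := pow_le_one₀ hγ0 hγ1.le (n := k + 1)
        exact mul_nonneg (by linarith) (hqc0 k)
      have hterm_le : ∀ k ∈ Finset.range n,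
          (1 - γ ^ (k + 1)) * qc k ≤ (1 - γ) * (((1 : ℝ) + k) * u k) := by
        intro k _
        have h3 : 1 - γ ^ (k + 1) ≤ ((k : ℝ) + 1) * (1 - γ) := by
          have := one_sub_pow_le hγ0 hγ1.le (k + 1)
          push_cast at this ⊢
          linarith
        have h4 : 0 ≤ 1 - γ ^ (k + 1) := by
          have := pow_le_one₀ hγ0 hγ1.le (n := k + 1); linarith
        calc (1 - γ ^ (k + 1)) * qc k ≤ (1 - γ ^ (k + 1)) * u k :=
              mul_le_mul_of_nonneg_left (hqcu k) h4
          _ ≤ (((k : ℝ) + 1) * (1 - γ)) * u k :=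
              mul_le_mul_of_nonneg_right h3 (hu0 k)
          _ = (1 - γ) * (((1 : ℝ) + k) * u k) := by ring
      have hsum_le : ∑ k ∈ Finset.range n, (1 - γ ^ (k + 1)) * qc k
          ≤ (1 - γ) * K := by
        calc ∑ k ∈ Finset.range n, (1 - γ ^ (k + 1)) * qc k
            ≤ ∑ k ∈ Finset.range n, (1 - γ) * (((1 : ℝ) + k) * u k) :=
              Finset.sum_le_sum hterm_le
          _ = (1 - γ) * ∑ k ∈ Finset.range n, ((1 : ℝ) + k) * u k := by
              rw [Finset.mul_sum]
          _ ≤ (1 - γ) * K := mul_le_mul_of_nonneg_left (hK f n s) h1γ.le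
      have hge : 0 ≤ 1 - ∑ k ∈ Finset.range n, γ ^ (k + 1) * qc k := by
        rw [hsplit]
        exact add_nonneg (hu0 n) (Finset.sum_nonneg hterm_nonneg)
      have hle : 1 - ∑ k ∈ Finset.range n, γ ^ (k + 1) * qc k
          ≤ u n + (1 - γ) * K := by
        rw [hsplit]
        exact add_le_add_right hsum_le (u n)
      rw [abs_sub_comm, abs_of_nonneg hge]
      exact hle
    have hE : ∀ n : ℕ, |∑ t, (Q ^ n) s t * V t| ≤ Vb := by
      intro n
      calc |∑ t, (Q ^ n) s t * V t| ≤ ∑ t, |(Q ^ n) s t * V t| :=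
            Finset.abs_sum_le_sum_abs _ _
        _ ≤ ∑ t, (Q ^ n) s t * Vb := by
            refine Finset.sum_le_sum fun t _ => ?_
            rw [abs_mul, abs_of_nonneg (pow_nonneg' (tabooMat_nonneg hP) n s t)]
            exact mul_le_mul_of_nonneg_left (hVabs t)
              (pow_nonneg' (tabooMat_nonneg hP) n s t)
        _ = u n * Vb := by
            rw [← Finset.sum_mul]
            have huq : u n = ∑ t, (Q ^ n) s t := by
              simp only [hudef]
              rw [hQdef]
              unfold uu
              rfl
            rw [huq]
        _ ≤ 1 * Vb := mul_le_mul_of_nonneg_right (hu1 n) hVb0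
        _ = Vb := one_mul _
    have hbound : ∀ n : ℕ, |V s - V sstar|
        ≤ B * K + Vb * u n + B * K + γ ^ n * Vb := by
      intro n
      rw [hWn n]
      have h1 : |V sstar * ((∑ k ∈ Finset.range n, γ ^ (k + 1) * qc k) - 1)|
          ≤ Vb * (u n + (1 - γ) * K) := by
        rw [abs_mul]
        exact mul_le_mul (hVabs sstar) (hD n) (abs_nonneg _) hVb0
      have h2 : |γ ^ n * ∑ t, (Q ^ n) s t * V t| ≤ γ ^ n * Vb := by
        rw [abs_mul, abs_of_nonneg (pow_nonneg hγ0 n)]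
        exact mul_le_mul_of_nonneg_left (hE n) (pow_nonneg hγ0 n)
      have h3 : Vb * ((1 - γ) * K) ≤ B * K := by
        have : Vb * (1 - γ) ≤ B := hVB
        nlinarith
      calc |(∑ k ∈ Finset.range n, γ ^ k * qR k)
            + V sstar * ((∑ k ∈ Finset.range n, γ ^ (k + 1) * qc k) - 1)
            + γ ^ n * ∑ t, (Q ^ n) s t * V t|
          ≤ |(∑ k ∈ Finset.range n, γ ^ k * qR k)
              + V sstar * ((∑ k ∈ Finset.range n, γ ^ (k + 1) * qc k) - 1)|
            + |γ ^ n * ∑ t, (Q ^ n) s t * V t| := abs_add_le _ _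
        _ ≤ |∑ k ∈ Finset.range n, γ ^ k * qR k|
            + |V sstar * ((∑ k ∈ Finset.range n, γ ^ (k + 1) * qc k) - 1)|
            + |γ ^ n * ∑ t, (Q ^ n) s t * V t| := by
            have := abs_add_le (∑ k ∈ Finset.range n, γ ^ k * qR k)
              (V sstar * ((∑ k ∈ Finset.range n, γ ^ (k + 1) * qc k) - 1))
            linarith [h2]
        _ ≤ B * K + Vb * (u n + (1 - γ) * K) + γ ^ n * Vb := by
            have := hA n
            linarith [h1, h2]
        _ ≤ B * K + Vb * u n + B * K + γ ^ n * Vb := by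
            have hd : Vb * (u n + (1 - γ) * K) = Vb * u n + Vb * ((1 - γ) * K) := by
              ring
            linarith [h3]
    -- pass to the limit n → ∞
    have huK : ∀ n : ℕ, u n ≤ K / ((n : ℝ) + 1) := by
      intro n
      have hmono : ∀ k ∈ Finset.range (n + 1), u n ≤ u k := by
        intro k hk
        exact uu_antitone hP s (Nat.lt_succ_iff.1 (Finset.mem_range.1 hk))
      have hcard : ((n : ℝ) + 1) * u n ≤ ∑ k ∈ Finset.range (n + 1), u k := by
        have := Finset.card_nsmul_le_sum (Finset.range (n + 1)) _ (u n) hmono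
        rw [Finset.card_range] at this
        have h5 : (↑(n + 1) : ℝ) * u n ≤ ∑ k ∈ Finset.range (n + 1), u k := by
          exact_mod_cast (by simpa [nsmul_eq_mul] using this)
        push_cast at h5
        linarith
      have h6 : ((n : ℝ) + 1) * u n ≤ K := le_trans hcard (hsumu (n + 1))
      rw [div_eq_inv_mul, ← mul_le_mul_iff_right₀ (show (0:ℝ) < (n:ℝ) + 1 by positivity)]
      calc ((n : ℝ) + 1) * u n ≤ K := h6
        _ = ((n:ℝ)+1) * (((n:ℝ)+1)⁻¹ * K) := by
            field_simp
      
    have hu_tend : Tendsto u atTop (𝓝 0) := by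
      refine squeeze_zero hu0 huK ?_
      have h7 : Tendsto (fun n : ℕ => K / ((n : ℝ) + 1)) atTop (𝓝 0) := by
        have := (tendsto_const_div_atTop_nhds_zero_nat K).comp (tendsto_add_atTop_nat 1)
        refine this.congr fun n => ?_
        simp only [Function.comp_apply]
        push_cast
        ring
      exact h7
    have hγ_tend : Tendsto (fun n : ℕ => γ ^ n) atTop (𝓝 0) :=
      tendsto_pow_atTop_nhds_zero_of_lt_one hγ0 hγ1
    have hRHS : Tendsto (fun n : ℕ => B * K + Vb * u n + B * K + γ ^ n * Vb)
        atTop (𝓝 (2 * B * K)) := by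
      have h8 : Tendsto (fun n : ℕ => B * K + Vb * u n + B * K + γ ^ n * Vb)
          atTop (𝓝 (B * K + Vb * 0 + B * K + 0 * Vb)) := by
        exact ((((tendsto_const_nhds.add ((tendsto_const_nhds).mul hu_tend))).add
          tendsto_const_nhds).add (hγ_tend.mul tendsto_const_nhds))
      convert h8 using 2
      ring
    exact ge_of_tendsto' hRHS hbound
  · -- |v| ≤ B
    rw [abs_mul, abs_of_nonneg h1γ.le]
    calc (1 - γ) * |V sstar| ≤ (1 - γ) * Vb :=
        mul_le_mul_of_nonneg_left (hVabs sstar) h1γ.le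
      _ ≤ B := by nlinarith
  · -- the Bellman equation for w, v
    intro s
    have hinner : ∀ a, R s a + γ * ∑ s', P s a s' * (V s' - V sstar)
        = (R s a + γ * ∑ s', P s a s' * V s') + (- (γ * V sstar)) := by
      intro a
      have h1 : ∑ s', P s a s' * (V s' - V sstar)
          = (∑ s', P s a s' * V s') - (∑ s', P s a s') * V sstar := by
        rw [Finset.sum_mul, ← Finset.sum_sub_distrib]
        exact Finset.sum_congr rfl fun _ _ => by ring
      rw [h1, hP.2 s a]
      ring
    calc (V s - V sstar) + (1 - γ) * V sstar = V s + (- (γ * V sstar)) := by ring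
      _ = (⨆ a, (R s a + γ * ∑ s', P s a s' * V s')) + (- (γ * V sstar)) := by
          rw [← hV s]
      _ = ⨆ a, ((R s a + γ * ∑ s', P s a s' * V s') + (- (γ * V sstar))) :=
          ciSup_add (Finite.bddAbove_range _) _
      _ = ⨆ a, (R s a + γ * ∑ s', P s a s' * (V s' - V sstar)) := by
          refine congrArg _ ?_
          funext a
          rw [hinner a]

/-! ### average reward of stationary policies -/

lemma stepDist_eq (P : S → A → S → ℝ) (π : S → A → ℝ) (s₀ : S) :
    ∀ (k : ℕ) (p : S × A),
      stepDist P π s₀ k p = ((polMatrix P π) ^ k) s₀ p.1 * π p.1 p.2 := by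
  intro k
  induction k with
  | zero =>
      intro p
      simp only [stepDist, pow_zero, Matrix.one_apply]
      congr 1
      simp [eq_comm]
  | succ k ih =>
      intro p
      simp only [stepDist]
      have h1 : ∑ q : S × A, stepDist P π s₀ k q * P q.1 q.2 p.1
          = ((polMatrix P π) ^ (k + 1)) s₀ p.1 := by
        rw [Fintype.sum_prod_type, pow_succ, Matrix.mul_apply]
        refine Finset.sum_congr rfl fun s _ => ?_
        have h2 : polMatrix P π s p.1 = ∑ a, π s a * P s a p.1 := rfl
        rw [h2, Finset.mul_sum]
        refine Finset.sum_congr rfl fun a _ => ?_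
        rw [ih (s, a)]
        ring
      rw [h1]

lemma expRw_eq (P : S → A → S → ℝ) (π : S → A → ℝ) (R : S → A → ℝ)
    (s₀ : S) (k : ℕ) :
    expRw P π s₀ R k
      = ∑ s, ((polMatrix P π) ^ k) s₀ s * ∑ a, π s a * R s a := by
  unfold expRw
  rw [Fintype.sum_prod_type]
  refine Finset.sum_congr rfl fun s _ => ?_
  rw [Finset.mul_sum]
  refine Finset.sum_congr rfl fun a _ => ?_
  rw [stepDist_eq]
  ring

lemma pow_sum_swap {M : Matrix S S ℝ} (T : ℕ) (s : S) (g : S → ℝ) :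
    ∑ s', (M ^ (T + 1)) s s' * g s'
      = ∑ t, (M ^ T) s t * ∑ s', M t s' * g s' := by
  rw [pow_succ]
  simp_rw [Matrix.mul_apply, Finset.sum_mul]
  rw [Finset.sum_comm]
  refine Finset.sum_congr rfl fun t _ => ?_
  rw [Finset.mul_sum]
  exact Finset.sum_congr rfl fun s' _ => by ring

lemma cesaro_le {M : Matrix S S ℝ} (hM0 : ∀ i j, 0 ≤ M i j)
    (hM1 : ∀ i, ∑ j, M i j = 1) {Rp h : S → ℝ} {v : ℝ}
    (hineq : ∀ s, Rp s + ∑ s', M s s' * h s' ≤ h s + v) :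
    ∀ (T : ℕ) (s : S),
      (∑ k ∈ Finset.range T, ∑ s', (M ^ k) s s' * Rp s')
        + ∑ s', (M ^ T) s s' * h s' ≤ T * v + h s := by
  intro T
  induction T with
  | zero => intro s; simp [Matrix.one_apply, Finset.sum_ite_eq]
  | succ T ih =>
      intro s
      rw [Finset.sum_range_succ, pow_sum_swap T s h]
      have hcomb : (∑ s', (M ^ T) s s' * Rp s')
          + ∑ t, (M ^ T) s t * ∑ s', M t s' * h s'
          ≤ (∑ t, (M ^ T) s t * h t) + v := by
        have h1 : ∀ t, (M ^ T) s t * Rp t + (M ^ T) s t * ∑ s', M t s' * h s'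
            ≤ (M ^ T) s t * (h t + v) := by
          intro t
          rw [← mul_add]
          exact mul_le_mul_of_nonneg_left (hineq t) (pow_nonneg' hM0 T s t)
        calc (∑ s', (M ^ T) s s' * Rp s') + ∑ t, (M ^ T) s t * ∑ s', M t s' * h s'
            = ∑ t, ((M ^ T) s t * Rp t + (M ^ T) s t * ∑ s', M t s' * h s') := by
              rw [Finset.sum_add_distrib]
          _ ≤ ∑ t, (M ^ T) s t * (h t + v) := Finset.sum_le_sum fun t _ => h1 t
          _ = (∑ t, (M ^ T) s t * h t) + (∑ t, (M ^ T) s t) * v := by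
              simp_rw [mul_add, Finset.sum_add_distrib, Finset.sum_mul]
          _ = (∑ t, (M ^ T) s t * h t) + v := by
              rw [pow_rowsum hM1 T s, one_mul]
      have hih := ih s
      push_cast
      linarith

lemma cesaro_eq {M : Matrix S S ℝ} (hM1 : ∀ i, ∑ j, M i j = 1)
    {Rp h : S → ℝ} {v : ℝ}
    (heq : ∀ s, Rp s + ∑ s', M s s' * h s' = h s + v) :
    ∀ (T : ℕ) (s : S),
      (∑ k ∈ Finset.range T, ∑ s', (M ^ k) s s' * Rp s')
        + ∑ s', (M ^ T) s s' * h s' = T * v + h s := by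
  intro T
  induction T with
  | zero => intro s; simp [Matrix.one_apply, Finset.sum_ite_eq]
  | succ T ih =>
      intro s
      rw [Finset.sum_range_succ, pow_sum_swap T s h]
      have hcomb : (∑ s', (M ^ T) s s' * Rp s')
          + ∑ t, (M ^ T) s t * ∑ s', M t s' * h s'
          = (∑ t, (M ^ T) s t * h t) + v := by
        calc (∑ s', (M ^ T) s s' * Rp s') + ∑ t, (M ^ T) s t * ∑ s', M t s' * h s'
            = ∑ t, (M ^ T) s t * (Rp t + ∑ s', M t s' * h s') := by
              rw [← Finset.sum_add_distrib]
              exact Finset.sum_congr rfl fun t _ => by ring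
          _ = ∑ t, (M ^ T) s t * (h t + v) := by
              exact Finset.sum_congr rfl fun t _ => by rw [heq t]
          _ = (∑ t, (M ^ T) s t * h t) + (∑ t, (M ^ T) s t) * v := by
              simp_rw [mul_add, Finset.sum_add_distrib, Finset.sum_mul]
          _ = (∑ t, (M ^ T) s t * h t) + v := by
              rw [pow_rowsum hM1 T s, one_mul]
      have hih := ih s
      push_cast
      linarith

lemma row_dot_abs_le {M : Matrix S S ℝ} (hM0 : ∀ i j, 0 ≤ M i j)
    (hM1 : ∀ i, ∑ j, M i j = 1) {h : S → ℝ} {Ch : ℝ} (hCh : ∀ s, |h s| ≤ Ch)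
    (n : ℕ) (s : S) : |∑ s', (M ^ n) s s' * h s'| ≤ Ch := by
  calc |∑ s', (M ^ n) s s' * h s'| ≤ ∑ s', |(M ^ n) s s' * h s'| :=
        Finset.abs_sum_le_sum_abs _ _
    _ ≤ ∑ s', (M ^ n) s s' * Ch := by
        refine Finset.sum_le_sum fun s' _ => ?_
        rw [abs_mul, abs_of_nonneg (pow_nonneg' hM0 n s s')]
        exact mul_le_mul_of_nonneg_left (hCh s') (pow_nonneg' hM0 n s s')
    _ = Ch := by rw [← Finset.sum_mul, pow_rowsum hM1 n s, one_mul]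

/-! ### optimality of the Bellman value -/

lemma optAvg_eq [Nonempty S] [Nonempty A] (hP : IsKernel P) {R : S → A → ℝ}
    {h : S → ℝ} {v : ℝ}
    (hbell : ∀ s, h s + v = ⨆ a, (R s a + ∑ s', P s a s' * h s')) (s₀ : S) :
    v = optAvg P s₀ R := by
  classical
  obtain ⟨s₂, hs₂⟩ := Finite.exists_max (fun s => |h s|)
  set Ch := |h s₂| with hChdef
  have hCh : ∀ s, |h s| ≤ Ch := hs₂
  have hCh0 : 0 ≤ Ch := abs_nonneg _
  -- every achievable average reward is at most `v`
  have hupper : ∀ w ∈ {w : ℝ | ∃ π : S → A → ℝ, IsPolicy π ∧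
      Tendsto (avgSeq P π s₀ R) atTop (nhds w)}, w ≤ v := by
    rintro w ⟨π, hπ, hw⟩
    set M := polMatrix P π with hMdef
    set Rp : S → ℝ := fun s => ∑ a, π s a * R s a with hRpdef
    have hineq : ∀ s, Rp s + ∑ s', M s s' * h s' ≤ h s + v := by
      intro s
      have hexp : Rp s + ∑ s', M s s' * h s'
          = ∑ a, π s a * (R s a + ∑ s', P s a s' * h s') := by
        have h1 : ∑ s', M s s' * h s'
            = ∑ a, π s a * ∑ s', P s a s' * h s' := by
          rw [hMdef]
          simp only [polMatrix, Matrix.of_apply]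
          simp_rw [Finset.sum_mul]
          rw [Finset.sum_comm]
          refine Finset.sum_congr rfl fun a _ => ?_
          rw [Finset.mul_sum]
          exact Finset.sum_congr rfl fun s' _ => by ring
        rw [h1, hRpdef]
        simp only
        rw [← Finset.sum_add_distrib]
        exact Finset.sum_congr rfl fun a _ => by ring
      rw [hexp]
      calc ∑ a, π s a * (R s a + ∑ s', P s a s' * h s')
          ≤ ∑ a, π s a * (h s + v) := by
            refine Finset.sum_le_sum fun a _ => ?_
            refine mul_le_mul_of_nonneg_left ?_ (hπ.1 s a)
            rw [hbell s]
            exact le_ciSup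
              (Finite.bddAbove_range fun a => R s a + ∑ s', P s a s' * h s') a
        _ = h s + v := by rw [← Finset.sum_mul, hπ.2 s, one_mul]
    have hces := cesaro_le (polMatrix_nonneg hP hπ) (polMatrix_rowsum hP hπ) hineq
    have havg : ∀ T : ℕ, 1 ≤ T → avgSeq P π s₀ R T ≤ v + 2 * Ch / T := by
      intro T hT
      have hT0 : (0 : ℝ) < T := by exact_mod_cast hT
      have hsum : ∑ k ∈ Finset.range T, expRw P π s₀ R k
          = ∑ k ∈ Finset.range T, ∑ s', (M ^ k) s₀ s' * Rp s' :=
        Finset.sum_congr rfl fun k _ => expRw_eq P π R s₀ k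
      have hb1 : |∑ s', (M ^ T) s₀ s' * h s'| ≤ Ch :=
        row_dot_abs_le (polMatrix_nonneg hP hπ) (polMatrix_rowsum hP hπ) hCh T s₀
      have hnum : ∑ k ∈ Finset.range T, expRw P π s₀ R k ≤ T * v + 2 * Ch := by
        rw [hsum]
        have := hces T s₀
        have hb2 : |h s₀| ≤ Ch := hCh s₀
        have hb1' := abs_le.1 hb1
        have hb2' := abs_le.1 hb2
        linarith
      unfold avgSeq
      rw [div_le_iff₀ hT0]
      have hrhs : (v + 2 * Ch / T) * T = T * v + 2 * Ch := by
        field_simp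
      rw [hrhs]
      exact hnum
    have hlim2 : Tendsto (fun T : ℕ => avgSeq P π s₀ R T - (v + 2 * Ch / T))
        atTop (𝓝 (w - (v + 0))) :=
      hw.sub (tendsto_const_nhds.add (tendsto_const_div_atTop_nhds_zero_nat (2 * Ch)))
    have hle : w - (v + 0) ≤ 0 := by
      refine le_of_tendsto hlim2 ?_
      refine Filter.eventually_atTop.2 ⟨1, fun T hT => sub_nonpos.2 (havg T hT)⟩
    linarith
  -- the greedy policy achieves `v`
  choose g hg using fun s =>
    exists_ciSup_eq (fun a => R s a + ∑ s', P s a s' * h s')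
  have heqv : ∀ s, R s (g s) + ∑ s', detMat P g s s' * h s' = h s + v := by
    intro s
    have h1 := (hbell s).trans (hg s)
    unfold detMat
    simp only [Matrix.of_apply]
    exact h1.symm
  have hces := cesaro_eq (detMat_rowsum hP g)
    (Rp := fun s => R s (g s)) (h := h) (v := v) heqv
  have hRp : ∀ s, (∑ a, detPol g s a * R s a) = R s (g s) := by
    intro s
    unfold detPol
    simp [ite_mul]
  have htend : Tendsto (avgSeq P (detPol g) s₀ R) atTop (𝓝 v) := by
    rw [← tendsto_sub_nhds_zero_iff]
    have hMg : polMatrix P (detPol g) = detMat P g := polMatrix_detPol P g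
    have hev : ∀ᶠ T : ℕ in atTop,
        ‖avgSeq P (detPol g) s₀ R T - v‖ ≤ 2 * Ch / T := by
      refine Filter.eventually_atTop.2 ⟨1, fun T hT => ?_⟩
      have hT0 : (0 : ℝ) < T := by exact_mod_cast hT
      have hsum : ∑ k ∈ Finset.range T, expRw P (detPol g) s₀ R k
          = ∑ k ∈ Finset.range T, ∑ s', ((detMat P g) ^ k) s₀ s' * R s' (g s') := by
        refine Finset.sum_congr rfl fun k _ => ?_
        rw [expRw_eq P (detPol g) R s₀ k, hMg]
        exact Finset.sum_congr rfl fun s _ => by rw [hRp s]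
      have hnum : ∑ k ∈ Finset.range T, expRw P (detPol g) s₀ R k
          = T * v + h s₀ - ∑ s', ((detMat P g) ^ T) s₀ s' * h s' := by
        rw [hsum]
        have := hces T s₀
        linarith
      have hb1 : |h s₀ - ∑ s', ((detMat P g) ^ T) s₀ s' * h s'| ≤ 2 * Ch := by
        have hb2 := row_dot_abs_le (detMat_nonneg hP g) (detMat_rowsum hP g) hCh T s₀
        have hb3 := hCh s₀
        have hb2' := abs_le.1 hb2
        have hb3' := abs_le.1 hb3
        rw [abs_le]
        constructor <;> linarith
      have hdiff : avgSeq P (detPol g) s₀ R T - v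
          = (h s₀ - ∑ s', ((detMat P g) ^ T) s₀ s' * h s') / T := by
        unfold avgSeq
        rw [hnum]
        field_simp
        ring
      rw [hdiff, Real.norm_eq_abs, abs_div, abs_of_pos hT0]
      exact (div_le_div_iff_of_pos_right hT0).2 hb1
    have hzero : Tendsto (fun T : ℕ => 2 * Ch / (T : ℝ)) atTop (𝓝 0) :=
      tendsto_const_div_atTop_nhds_zero_nat (2 * Ch)
    exact squeeze_zero_norm' hev hzero
  have hmem : v ∈ {w : ℝ | ∃ π : S → A → ℝ, IsPolicy π ∧
      Tendsto (avgSeq P π s₀ R) atTop (nhds w)} :=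
    ⟨detPol g, isPolicy_detPol g, htend⟩
  have hbdd : BddAbove {w : ℝ | ∃ π : S → A → ℝ, IsPolicy π ∧
      Tendsto (avgSeq P π s₀ R) atTop (nhds w)} :=
    ⟨v, fun w hw => hupper w hw⟩
  unfold optAvg
  exact le_antisymm (le_csSup hbdd hmem) (csSup_le ⟨v, hmem⟩ fun w hw => hupper w hw)

end StmtTwo

end StmtTwoAux
/-- For a finite MDP with bounded reward admitting a state
`s*` recurrent under every stationary policy, there are `v ∈ ℝ` and
`h : S → ℝ` solving the average-reward Bellman equation
`h(s) + v = max_a (R(s,a) + Σ_{s'} P(s,a,s') h(s'))`, and `v` equals the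
optimal expected average reward from every initial state. -/
theorem stmt2 {S A : Type*} [Fintype S] [Fintype A]
    [DecidableEq S] [DecidableEq A] [Nonempty S] [Nonempty A]
    (P : S → A → S → ℝ) (hP : IsKernel P) (R : S → A → ℝ)
    (sstar : S) (hrec : RecurrentForAll P sstar) :
    ∃ (v : ℝ) (h : S → ℝ),
      (∀ s : S, h s + v
          = ⨆ a : A, (R s a + ∑ s' : S, P s a s' * h s')) ∧
      ∀ s₀ : S, v = optAvg P s₀ R := by
  classical
  obtain ⟨p₀, hp₀⟩ := Finite.exists_max (fun p : S × A => |R p.1 p.2|)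
  set B := |R p₀.1 p₀.2| with hBdef
  have hB : ∀ s a, |R s a| ≤ B := fun s a => hp₀ (s, a)
  have hB0 : 0 ≤ B := abs_nonneg _
  obtain ⟨K, hK0, hK⟩ := StmtTwo.exists_K_uniform (P := P) (sstar := sstar) hP hrec
  set C := 2 * B * K with hCdef
  have hC0 : 0 ≤ C := by rw [hCdef]; positivity
  set γs : ℕ → ℝ := fun j => 1 - ((j : ℝ) + 2)⁻¹ with hγsdef
  have hpos : ∀ j : ℕ, (0 : ℝ) < (j : ℝ) + 2 := fun j => by positivity
  have hγ0 : ∀ j : ℕ, 0 ≤ γs j := by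
    intro j
    have h3 : ((j : ℝ) + 2)⁻¹ ≤ 1 := by
      rw [← one_div, div_le_one (hpos j)]
      have := Nat.cast_nonneg (α := ℝ) j
      linarith
    simp only [hγsdef]
    linarith
  have hγ1 : ∀ j : ℕ, γs j < 1 := by
    intro j
    have h3 : 0 < ((j : ℝ) + 2)⁻¹ := inv_pos.2 (hpos j)
    simp only [hγsdef]
    linarith
  have hγlim : Tendsto γs atTop (𝓝 1) := by
    have h0 : Tendsto (fun j : ℕ => (j : ℝ) + 2) atTop atTop :=
      tendsto_atTop_add_const_right atTop 2 tendsto_natCast_atTop_atTop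
    have h1 : Tendsto (fun j : ℕ => ((j : ℝ) + 2)⁻¹) atTop (𝓝 0) :=
      h0.inv_tendsto_atTop
    have h2 := (tendsto_const_nhds (x := (1 : ℝ)) (f := atTop)).sub h1
    simp only [sub_zero] at h2
    simp only [hγsdef]
    exact h2
  choose w uv hw huv heq using fun j =>
    StmtTwo.key (P := P) (sstar := sstar) hP hB hB0 hK0 hK (hγ0 j) (hγ1 j)
  have hwC : ∀ j s, |w j s| ≤ C := fun j s => by rw [hCdef]; exact hw j s
  -- extract a convergent subsequence
  set x : ℕ → ℝ × (S → ℝ) := fun j => (uv j, w j) with hxdef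
  have hcomp : IsCompact ((Set.Icc (-B) B) ×ˢ Metric.closedBall (0 : S → ℝ) C) :=
    (isCompact_Icc).prod (isCompact_closedBall _ _)
  have hmem : ∀ j, x j ∈ (Set.Icc (-B) B) ×ˢ Metric.closedBall (0 : S → ℝ) C := by
    intro j
    refine Set.mem_prod.2 ⟨Set.mem_Icc.2 (abs_le.1 (huv j)), ?_⟩
    rw [Metric.mem_closedBall, dist_pi_le_iff hC0]
    intro s
    rw [Real.dist_eq]
    simpa using hwC j s
  obtain ⟨⟨v, h⟩, -, φ, hφ, hlim⟩ := hcomp.tendsto_subseq hmem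
  have hu' : Tendsto (fun j => uv (φ j)) atTop (𝓝 v) :=
    (continuous_fst.tendsto (v, h)).comp hlim
  have hwfun : Tendsto (fun j => w (φ j)) atTop (𝓝 h) :=
    (continuous_snd.tendsto (v, h)).comp hlim
  have hwpt : ∀ s, Tendsto (fun j => w (φ j) s) atTop (𝓝 (h s)) :=
    fun s => ((continuous_apply s).tendsto h).comp hwfun
  have hγφ : Tendsto (fun j => γs (φ j)) atTop (𝓝 1) :=
    hγlim.comp hφ.tendsto_atTop
  have hdist : Tendsto (fun j => dist (w (φ j)) h) atTop (𝓝 0) :=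
    tendsto_iff_dist_tendsto_zero.1 hwfun
  -- pass to the limit in the discounted Bellman equations
  have hbell : ∀ s, h s + v = ⨆ a, (R s a + ∑ s', P s a s' * h s') := by
    intro s
    have L1 : Tendsto (fun j => w (φ j) s + uv (φ j)) atTop (𝓝 (h s + v)) :=
      (hwpt s).add hu'
    have L1' : Tendsto
        (fun j => ⨆ a, (R s a + γs (φ j) * ∑ s', P s a s' * w (φ j) s'))
        atTop (𝓝 (h s + v)) := L1.congr fun j => heq (φ j) s
    have L2 : Tendsto
        (fun j => ⨆ a, (R s a + γs (φ j) * ∑ s', P s a s' * w (φ j) s'))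
        atTop (𝓝 (⨆ a, (R s a + ∑ s', P s a s' * h s'))) := by
      rw [tendsto_iff_dist_tendsto_zero]
      refine squeeze_zero (fun j => dist_nonneg)
        (g := fun j => |γs (φ j) - 1| * C + dist (w (φ j)) h) ?_ ?_
      · intro j
        rw [Real.dist_eq]
        refine StmtTwo.abs_ciSup_sub_ciSup_le fun a => ?_
        have hd1 : |∑ s', P s a s' * w (φ j) s'| ≤ C := by
          calc |∑ s', P s a s' * w (φ j) s'| ≤ ∑ s', |P s a s' * w (φ j) s'| :=
                Finset.abs_sum_le_sum_abs _ _
            _ ≤ ∑ s', P s a s' * C := by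
                refine Finset.sum_le_sum fun s' _ => ?_
                rw [abs_mul, abs_of_nonneg (hP.1 s a s')]
                exact mul_le_mul_of_nonneg_left (hwC (φ j) s') (hP.1 s a s')
            _ = C := by rw [← Finset.sum_mul, hP.2 s a, one_mul]
        have hd2 : |(∑ s', P s a s' * w (φ j) s') - ∑ s', P s a s' * h s'|
            ≤ dist (w (φ j)) h := by
          have hsub : (∑ s', P s a s' * w (φ j) s') - ∑ s', P s a s' * h s'
              = ∑ s', P s a s' * (w (φ j) s' - h s') := by
            rw [← Finset.sum_sub_distrib]
            exact Finset.sum_congr rfl fun _ _ => by ring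
          rw [hsub]
          calc |∑ s', P s a s' * (w (φ j) s' - h s')|
              ≤ ∑ s', |P s a s' * (w (φ j) s' - h s')| :=
                Finset.abs_sum_le_sum_abs _ _
            _ ≤ ∑ s', P s a s' * dist (w (φ j)) h := by
                refine Finset.sum_le_sum fun s' _ => ?_
                rw [abs_mul, abs_of_nonneg (hP.1 s a s')]
                refine mul_le_mul_of_nonneg_left ?_ (hP.1 s a s')
                rw [← Real.dist_eq]
                exact dist_le_pi_dist (w (φ j)) h s'
            _ = dist (w (φ j)) h := by rw [← Finset.sum_mul, hP.2 s a, one_mul]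
        have hkey : (R s a + γs (φ j) * ∑ s', P s a s' * w (φ j) s')
            - (R s a + ∑ s', P s a s' * h s')
            = (γs (φ j) - 1) * (∑ s', P s a s' * w (φ j) s')
              + ((∑ s', P s a s' * w (φ j) s') - ∑ s', P s a s' * h s') := by
          ring
        rw [hkey]
        calc |(γs (φ j) - 1) * (∑ s', P s a s' * w (φ j) s')
              + ((∑ s', P s a s' * w (φ j) s') - ∑ s', P s a s' * h s')|
            ≤ |(γs (φ j) - 1) * (∑ s', P s a s' * w (φ j) s')|
              + |(∑ s', P s a s' * w (φ j) s') - ∑ s', P s a s' * h s'| :=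
              abs_add_le _ _
          _ ≤ |γs (φ j) - 1| * C + dist (w (φ j)) h := by
              refine add_le_add ?_ hd2
              rw [abs_mul]
              exact mul_le_mul_of_nonneg_left hd1 (abs_nonneg _)
      · have h1 : Tendsto (fun j => |γs (φ j) - 1|) atTop (𝓝 0) := by
          have h2 := hγφ.sub (tendsto_const_nhds (x := (1 : ℝ)) (f := atTop))
          simp only [sub_self] at h2
          have h3 := h2.abs
          simpa using h3
        have h4 := (h1.mul_const C).add hdist
        simpa using h4
    exact tendsto_nhds_unique L1' L2
  exact ⟨v, h, hbell, fun s₀ => StmtTwo.optAvg_eq hP hbell s₀⟩
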